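/- Let the group Circle of unit complex numbers act on the unit sphere S⁴ = {(a,h,c) ∈ ℂ×ℝ×ℂ : |a|²+h²+|c|² = 1} by s·(a,h,c) = (sa, h, sc). Then there is a homeomorphism Φ from the orbit space S⁴/Circle to the unit sphere S³ = {(x,r,t) ∈ ℂ×ℝ×ℝ : |x|²+r²+t² = 1} such that for all s ∈ Circle and all (a,h,c) ∈ S⁴, writing Φ([a,h,c]) = (x,r,t), one has Φ([sa, h, c]) = (sx, r, t). -/

import Mathlib

/-- The unit sphere `S⁴ ⊂ ℂ × ℝ × ℂ`. -/
abbrev SphereCRC : Type := {q : ℂ × ℝ × ℂ // ‖q.1‖ ^ 2 + q.2.1 ^ 2 + ‖q.2.2‖ ^ 2 = 1}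

/-- The unit sphere `S³ ⊂ ℂ × ℝ × ℝ`. -/
abbrev SphereCRR : Type := {q : ℂ × ℝ × ℝ // ‖q.1‖ ^ 2 + q.2.1 ^ 2 + q.2.2 ^ 2 = 1}

/-- The defining `Circle`-action `s · (a, h, c) = (s a, h, s c)` on `S⁴`. -/
def actFirstThird (s : Circle) (x : SphereCRC) : SphereCRC :=
  ⟨((s : ℂ) * x.val.1, x.val.2.1, (s : ℂ) * x.val.2.2), by
    have h := x.property; simpa [Circle.norm_coe] using h⟩

/-- The auxiliary action `s · (a, h, c) = (s a, h, c)` on `S⁴`. -/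
def actFirst (s : Circle) (x : SphereCRC) : SphereCRC :=
  ⟨((s : ℂ) * x.val.1, x.val.2.1, x.val.2.2), by
    have h := x.property; simpa [Circle.norm_coe] using h⟩

/-- The orbit relation of the `Circle`-action `s · (a, h, c) = (s a, h, s c)` on `S⁴`. -/
def orbitRelS4 (x y : SphereCRC) : Prop := ∃ s : Circle, actFirstThird s x = y

noncomputable section S4Helper
open Complex

private lemma circle_norm (s : Circle) : ‖(s : ℂ)‖ = 1 := Circle.norm_coe s

private lemma circle_mk_norm (z : ℂ) (h : ‖z‖ = 1) : z ∈ Submonoid.unitSphere ℂ := by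
  simp [Submonoid.unitSphere, mem_sphere_zero_iff_norm, h]

private lemma sq_eq_of_nonneg {x y : ℝ} (hx : 0 ≤ x) (hy : 0 ≤ y) (h : x ^ 2 = y ^ 2) :
    x = y := by nlinarith

/-- The intermediate "ellipsoid". -/
abbrev EllE : Type :=
  {q : ℂ × ℝ × ℝ // ‖q.1‖ ^ 2 + q.2.2 ^ 2 = (1 - q.2.1 ^ 2) ^ 2 ∧ q.2.1 ^ 2 ≤ 1}

instance : CompactSpace SphereCRC := by
  refine (isCompact_iff_compactSpace (s := {q : ℂ × ℝ × ℂ | ‖q.1‖ ^ 2 + q.2.1 ^ 2 + ‖q.2.2‖ ^ 2 = 1})).mp ?_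
  rw [Metric.isCompact_iff_isClosed_bounded]
  constructor
  · exact isClosed_eq (by fun_prop) continuous_const
  · apply Bornology.IsBounded.subset (Metric.isBounded_closedBall (x := (0 : ℂ × ℝ × ℂ)) (r := 1))
    intro q hq
    have hq' : ‖q.1‖ ^ 2 + q.2.1 ^ 2 + ‖q.2.2‖ ^ 2 = 1 := hq
    simp only [Metric.mem_closedBall, dist_zero_right, Prod.norm_def, Real.norm_eq_abs,
      max_le_iff]
    have n1 := norm_nonneg q.1; have n2 := norm_nonneg q.2.2
    refine ⟨by nlinarith [sq_nonneg q.2.1], by rw [abs_le]; constructor <;> nlinarith, by nlinarith [sq_nonneg q.2.1]⟩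

instance : CompactSpace SphereCRR := by
  refine (isCompact_iff_compactSpace (s := {q : ℂ × ℝ × ℝ | ‖q.1‖ ^ 2 + q.2.1 ^ 2 + q.2.2 ^ 2 = 1})).mp ?_
  rw [Metric.isCompact_iff_isClosed_bounded]
  constructor
  · exact isClosed_eq (by fun_prop) continuous_const
  · apply Bornology.IsBounded.subset (Metric.isBounded_closedBall (x := (0 : ℂ × ℝ × ℝ)) (r := 1))
    intro q hq
    have hq' : ‖q.1‖ ^ 2 + q.2.1 ^ 2 + q.2.2 ^ 2 = 1 := hq
    simp only [Metric.mem_closedBall, dist_zero_right, Prod.norm_def, Real.norm_eq_abs,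
      max_le_iff]
    have n1 := norm_nonneg q.1
    refine ⟨by nlinarith [sq_nonneg q.2.1, sq_nonneg q.2.2],
      by rw [abs_le]; constructor <;> nlinarith [sq_nonneg q.2.2],
      by rw [abs_le]; constructor <;> nlinarith [sq_nonneg q.2.1]⟩

instance : CompactSpace (Quot orbitRelS4) := by
  constructor
  have hr : Set.range (Quot.mk orbitRelS4) = Set.univ :=
    Set.range_eq_univ.mpr Quot.mk_surjective
  rw [← hr]
  exact isCompact_range continuous_quot_mk

/-- The invariant map `S⁴ → E`. -/
def pMap (x : SphereCRC) : EllE :=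
  ⟨(2 * x.val.1 * (starRingEnd ℂ) x.val.2.2, x.val.2.1, ‖x.val.1‖ ^ 2 - ‖x.val.2.2‖ ^ 2), by
    obtain ⟨⟨a, h, c⟩, hx⟩ := x
    simp only at hx ⊢
    have h2 : ‖2 * a * (starRingEnd ℂ) c‖ = 2 * ‖a‖ * ‖c‖ := by
      simp [norm_mul, RCLike.norm_conj]
    rw [h2]
    constructor
    · nlinarith [norm_nonneg a, norm_nonneg c]
    · nlinarith [sq_nonneg ‖a‖, sq_nonneg ‖c‖]⟩

lemma pMap_actFirstThird (s : Circle) (x : SphereCRC) :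
    pMap (actFirstThird s x) = pMap x := by
  apply Subtype.ext
  have hs : (s : ℂ) * (starRingEnd ℂ) (s : ℂ) = 1 := by
    rw [Complex.mul_conj]
    norm_cast
    simp [Complex.normSq_eq_norm_sq, Circle.norm_coe]
  have hs1 : ‖(s : ℂ)‖ = 1 := circle_norm s
  simp only [pMap, actFirstThird, map_mul, norm_mul, hs1, one_mul]
  refine Prod.ext ?_ (Prod.ext rfl rfl)
  simp only
  linear_combination (2 * x.val.1 * (starRingEnd ℂ) x.val.2.2) * hs

lemma pMap_actFirst (s : Circle) (x : SphereCRC) :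
    (pMap (actFirst s x)).val = ((s : ℂ) * (pMap x).val.1, (pMap x).val.2.1, (pMap x).val.2.2) := by
  have hs1 : ‖(s : ℂ)‖ = 1 := circle_norm s
  simp only [pMap, actFirst, norm_mul, hs1, one_mul]
  refine Prod.ext ?_ (Prod.ext rfl rfl)
  simp only
  ring

/-- Key algebra: equal invariants give an element of the circle moving one pair to the other. -/
lemma exists_circle {a c a' c' : ℂ} (hna : ‖a‖ = ‖a'‖) (hnc : ‖c‖ = ‖c'‖)
    (hX : a * (starRingEnd ℂ) c = a' * (starRingEnd ℂ) c') :
    ∃ s : Circle, (s : ℂ) * a = a' ∧ (s : ℂ) * c = c' := by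
  by_cases ha : a = 0
  · have ha' : a' = 0 := by
      rw [← norm_eq_zero, ← hna, ha, norm_zero]
    by_cases hc : c = 0
    · have hc' : c' = 0 := by rw [← norm_eq_zero, ← hnc, hc, norm_zero]
      exact ⟨1, by simp [ha, ha', hc, hc']⟩
    · refine ⟨⟨c' / c, circle_mk_norm _ ?_⟩, ?_, ?_⟩
      · rw [norm_div, ← hnc, div_self (by simpa using hc)]
      · simp [ha, ha']
      · simpa using div_mul_cancel₀ c' hc
  · refine ⟨⟨a' / a, circle_mk_norm _ ?_⟩, ?_, ?_⟩
    · rw [norm_div, ← hna, div_self (by simpa using ha)]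
    · simpa using div_mul_cancel₀ a' ha
    · have hconj : (starRingEnd ℂ) a * c = (starRingEnd ℂ) a' * c' := by
        have := congrArg (starRingEnd ℂ) hX
        simpa [map_mul] using this
      have hnsq : a' * (starRingEnd ℂ) a' = a * (starRingEnd ℂ) a := by
        rw [Complex.mul_conj, Complex.mul_conj]
        norm_cast
        simp [Complex.normSq_eq_norm_sq, hna]
      have hcne : (starRingEnd ℂ) a ≠ 0 := by simpa using ha
      have key : a' * c = a * c' := by
        apply mul_left_cancel₀ hcne
        calc (starRingEnd ℂ) a * (a' * c) = a' * ((starRingEnd ℂ) a * c) := by ring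
          _ = a' * ((starRingEnd ℂ) a' * c') := by rw [hconj]
          _ = (a' * (starRingEnd ℂ) a') * c' := by ring
          _ = (a * (starRingEnd ℂ) a) * c' := by rw [hnsq]
          _ = (starRingEnd ℂ) a * (a * c') := by ring
      show a' / a * c = c'
      field_simp
      linear_combination key

lemma pMap_injective_orbit {x y : SphereCRC} (h : pMap x = pMap y) : orbitRelS4 x y := by
  obtain ⟨⟨a, hh, c⟩, hx⟩ := x
  obtain ⟨⟨a', hh', c'⟩, hy⟩ := y
  have h1 := congrArg (fun z => z.val.1) h
  have h2 := congrArg (fun z => z.val.2.1) h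
  have h3 := congrArg (fun z => z.val.2.2) h
  simp only [pMap] at h1 h2 h3
  simp only at hx hy
  have hX : a * (starRingEnd ℂ) c = a' * (starRingEnd ℂ) c' := by
    have h2' : (2 : ℂ) ≠ 0 := two_ne_zero
    apply mul_left_cancel₀ h2'
    linear_combination h1
  have hsum : ‖a‖ ^ 2 + ‖c‖ ^ 2 = ‖a'‖ ^ 2 + ‖c'‖ ^ 2 := by
    rw [h2] at hx
    linarith
  have hna : ‖a‖ = ‖a'‖ := sq_eq_of_nonneg (norm_nonneg _) (norm_nonneg _) (by linarith)
  have hnc : ‖c‖ = ‖c'‖ := sq_eq_of_nonneg (norm_nonneg _) (norm_nonneg _) (by linarith)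
  obtain ⟨s, hsa, hsc⟩ := exists_circle hna hnc hX
  exact ⟨s, Subtype.ext (Prod.ext hsa (Prod.ext h2 hsc))⟩

lemma pMap_surjective : Function.Surjective pMap := by
  rintro ⟨⟨X, h, T⟩, hE, hh⟩
  simp only at hE hh
  set m := 1 - h ^ 2 with hm_def
  have hm : 0 ≤ m := by simp only [hm_def]; linarith
  have hXT : ‖X‖ ^ 2 + T ^ 2 = m ^ 2 := hE
  have hTle : T ≤ m := by nlinarith [norm_nonneg X, sq_nonneg ‖X‖]
  have hTge : -m ≤ T := by nlinarith [norm_nonneg X, sq_nonneg ‖X‖]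
  by_cases hTm : T = m
  · have hX0 : X = 0 := by
      have : ‖X‖ ^ 2 = 0 := by nlinarith
      simpa using pow_eq_zero_iff (n := 2) (by norm_num) |>.mp this
    refine ⟨⟨((Real.sqrt m : ℂ), h, 0), ?_⟩, ?_⟩
    · simp only [norm_zero, Complex.norm_real, Real.norm_eq_abs,
        _root_.abs_of_nonneg (Real.sqrt_nonneg m), Real.sq_sqrt hm]
      simp only [hm_def]; ring
    · apply Subtype.ext
      simp only [pMap, Complex.norm_real, Real.norm_eq_abs,
        _root_.abs_of_nonneg (Real.sqrt_nonneg m), Real.sq_sqrt hm]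
      refine Prod.ext ?_ (Prod.ext rfl ?_) <;> simp [hX0, hTm]
  · have hlt : 0 < m - T := lt_of_le_of_ne (by linarith) (fun hc => hTm (by linarith))
    set cr := Real.sqrt ((m - T) / 2) with hcr_def
    have hcr2 : cr ^ 2 = (m - T) / 2 := Real.sq_sqrt (by linarith)
    have hcrpos : 0 < cr := Real.sqrt_pos.mpr (by linarith)
    have hcrC : ((cr : ℂ)) ≠ 0 := by
      simpa using ne_of_gt hcrpos
    have hnormc : ‖((cr : ℂ))‖ = cr := by
      simp [Complex.norm_real, _root_.abs_of_nonneg hcrpos.le]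
    have hna2 : ‖X / (2 * (cr : ℂ))‖ ^ 2 = (m + T) / 2 := by
      rw [norm_div, div_pow, norm_mul, hnormc]
      have : ‖(2 : ℂ)‖ = 2 := by norm_num
      rw [this]
      rw [mul_pow]
      rw [hcr2]
      rw [div_eq_iff (by positivity)]
      nlinarith
    refine ⟨⟨(X / (2 * (cr : ℂ)), h, (cr : ℂ)), ?_⟩, ?_⟩
    · simp only [hna2, hnormc]
      rw [hcr2]
      simp only [hm_def]
      ring
    · apply Subtype.ext
      simp only [pMap, hna2, hnormc]
      refine Prod.ext ?_ (Prod.ext rfl ?_)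
      · simp only
        have hconj : (starRingEnd ℂ) ((cr : ℂ)) = (cr : ℂ) := Complex.conj_ofReal cr
        rw [hconj]
        field_simp
      · simp only [hcr2]
        ring

lemma pMap_continuous : Continuous pMap := by
  apply Continuous.subtype_mk
  have hconj : Continuous fun x : SphereCRC => (starRingEnd ℂ) x.val.2.2 :=
    Complex.continuous_conj.comp (by fun_prop)
  refine Continuous.prodMk ?_ (Continuous.prodMk (by fun_prop) (by fun_prop))
  exact (continuous_const.mul (by fun_prop)).mul hconj

/-- Descend to quotient. -/
def pBar : Quot orbitRelS4 → EllE :=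
  Quot.lift pMap (fun x y ⟨s, hs⟩ => by rw [← hs, pMap_actFirstThird])

lemma pBar_bijective : Function.Bijective pBar := by
  constructor
  · intro q1 q2
    induction q1 using Quot.ind with | _ x =>
    induction q2 using Quot.ind with | _ y =>
    intro h
    exact Quot.sound (pMap_injective_orbit h)
  · intro e
    obtain ⟨x, hx⟩ := pMap_surjective e
    exact ⟨Quot.mk _ x, hx⟩

lemma pBar_continuous : Continuous pBar :=
  continuous_quot_lift _ pMap_continuous

/-- The map `S³ → E`. -/
def sMap (y : SphereCRR) : EllE :=
  ⟨((Real.sqrt (1 - y.val.2.1 ^ 2) : ℂ) * y.val.1, y.val.2.1,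
     Real.sqrt (1 - y.val.2.1 ^ 2) * y.val.2.2), by
    obtain ⟨⟨x, r, t⟩, hy⟩ := y
    simp only at hy ⊢
    have hr : r ^ 2 ≤ 1 := by nlinarith [norm_nonneg x, sq_nonneg ‖x‖, sq_nonneg t]
    have hmm : (0:ℝ) ≤ 1 - r ^ 2 := by linarith
    have hs : Real.sqrt (1 - r ^ 2) ^ 2 = 1 - r ^ 2 := Real.sq_sqrt hmm
    constructor
    · rw [norm_mul, Complex.norm_real, Real.norm_eq_abs, _root_.abs_of_nonneg (Real.sqrt_nonneg _)]
      rw [mul_pow, mul_pow, hs]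
      nlinarith
    · exact hr⟩

lemma sMap_continuous : Continuous sMap := by
  apply Continuous.subtype_mk
  have h1 : Continuous fun y : SphereCRR => Real.sqrt (1 - y.val.2.1 ^ 2) := by
    apply Real.continuous_sqrt.comp
    fun_prop
  apply Continuous.prodMk
  · exact (Complex.continuous_ofReal.comp h1).mul (by fun_prop)
  · exact Continuous.prodMk (by fun_prop) (h1.mul (by fun_prop))

lemma sMap_injective : Function.Injective sMap := by
  rintro ⟨⟨x, r, t⟩, hy⟩ ⟨⟨x', r', t'⟩, hy'⟩ h
  have h1 := congrArg (fun z => z.val.1) h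
  have h2 := congrArg (fun z => z.val.2.1) h
  have h3 := congrArg (fun z => z.val.2.2) h
  simp only [sMap] at h1 h2 h3
  simp only at hy hy' h2
  subst h2
  apply Subtype.ext
  by_cases hr : r ^ 2 = 1
  · have hx : x = 0 := by
      have : ‖x‖ ^ 2 = 0 := by nlinarith [sq_nonneg t]
      simpa using pow_eq_zero_iff (n := 2) (by norm_num) |>.mp this
    have ht : t = 0 := by nlinarith [norm_nonneg x, sq_nonneg ‖x‖]
    have hx' : x' = 0 := by
      have : ‖x'‖ ^ 2 = 0 := by nlinarith [sq_nonneg t']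
      simpa using pow_eq_zero_iff (n := 2) (by norm_num) |>.mp this
    have ht' : t' = 0 := by nlinarith [norm_nonneg x', sq_nonneg ‖x'‖]
    simp [hx, ht, hx', ht']
  · have hrlt : r ^ 2 < 1 := lt_of_le_of_ne (by nlinarith [norm_nonneg x, sq_nonneg ‖x‖, sq_nonneg t]) hr
    have hspos : 0 < Real.sqrt (1 - r ^ 2) := Real.sqrt_pos.mpr (by linarith)
    have hxeq : x = x' := by
      have hC : ((Real.sqrt (1 - r ^ 2) : ℝ) : ℂ) ≠ 0 := by
        simpa using ne_of_gt hspos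
      exact mul_left_cancel₀ hC h1
    have hteq : t = t' := mul_left_cancel₀ (ne_of_gt hspos) h3
    simp [hxeq, hteq]

lemma sMap_surjective : Function.Surjective sMap := by
  rintro ⟨⟨X, h, T⟩, hE, hh⟩
  simp only at hE hh
  set m := 1 - h ^ 2 with hm_def
  have hm : 0 ≤ m := by simp only [hm_def]; linarith
  by_cases hm0 : m = 0
  · have hX0 : X = 0 := by
      have : ‖X‖ ^ 2 = 0 := by nlinarith [sq_nonneg T]
      simpa using pow_eq_zero_iff (n := 2) (by norm_num) |>.mp this
    have hT0 : T = 0 := by nlinarith [norm_nonneg X, sq_nonneg ‖X‖]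
    refine ⟨⟨(0, h, 0), by simp only [norm_zero]; simp only [hm_def] at hm0; nlinarith⟩, ?_⟩
    apply Subtype.ext
    simp [sMap, hX0, hT0]
  · have hmpos : 0 < m := lt_of_le_of_ne hm (Ne.symm hm0)
    have hspos : 0 < Real.sqrt m := Real.sqrt_pos.mpr hmpos
    have hs2 : Real.sqrt m ^ 2 = m := Real.sq_sqrt hm
    refine ⟨⟨(X / (Real.sqrt m : ℂ), h, T / Real.sqrt m), ?_⟩, ?_⟩
    · simp only [norm_div, Complex.norm_real, Real.norm_eq_abs,
        _root_.abs_of_nonneg (Real.sqrt_nonneg m), div_pow, hs2]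
      have hsum : ‖X‖ ^ 2 / m + T ^ 2 / m = m := by
        rw [← add_div, hE, sq, mul_div_assoc, div_self hm0, mul_one]
      linarith [hsum]
    · apply Subtype.ext
      simp only [sMap]
      have hC : ((Real.sqrt m : ℝ) : ℂ) ≠ 0 := by simpa using ne_of_gt hspos
      refine Prod.ext ?_ (Prod.ext rfl ?_)
      · simp only [hm_def]
        rw [← hm_def]
        field_simp
      · simp only [hm_def]
        rw [← hm_def]
        field_simp

/-- The homeomorphism `Quot orbitRelS4 ≃ₜ E`. -/
def homeoQE : Quot orbitRelS4 ≃ₜ EllE :=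
  Continuous.homeoOfEquivCompactToT2 (f := Equiv.ofBijective pBar pBar_bijective)
    pBar_continuous

/-- The homeomorphism `S³ ≃ₜ E`. -/
def homeoSE : SphereCRR ≃ₜ EllE :=
  Continuous.homeoOfEquivCompactToT2
    (f := Equiv.ofBijective sMap ⟨sMap_injective, sMap_surjective⟩) sMap_continuous

lemma homeoQE_apply (q : Quot orbitRelS4) : homeoQE q = pBar q := rfl

lemma homeoSE_apply (y : SphereCRR) : homeoSE y = sMap y := rfl

end S4Helper
/-- The orbit space `S⁴ / Circle` is homeomorphic to `S³ ⊂ ℂ × ℝ × ℝ`, in a way such that the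
induced action `s · (a, h, c) = (s a, h, c)` corresponds to `s · (x, r, t) = (s x, r, t)`. -/
theorem orbit_space_S4_circle_homeo_S3 :
    ∃ Φ : Quot orbitRelS4 ≃ₜ SphereCRR,
      ∀ (s : Circle) (x : SphereCRC),
        (Φ (Quot.mk orbitRelS4 (actFirst s x))).val =
          ((s : ℂ) * (Φ (Quot.mk orbitRelS4 x)).val.1,
            (Φ (Quot.mk orbitRelS4 x)).val.2.1,
            (Φ (Quot.mk orbitRelS4 x)).val.2.2) := by
  refine ⟨homeoQE.trans homeoSE.symm, ?_⟩
  intro s x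
  have hs1 : ‖(s : ℂ)‖ = 1 := circle_norm s
  set y0 : SphereCRR := homeoSE.symm (pMap x) with hy0def
  have hy0E : sMap y0 = pMap x := homeoSE.apply_symm_apply (pMap x)
  have hy1mem : ‖(s : ℂ) * y0.val.1‖ ^ 2 + y0.val.2.1 ^ 2 + y0.val.2.2 ^ 2 = 1 := by
    rw [norm_mul, hs1, one_mul]; exact y0.property
  set y1 : SphereCRR := ⟨((s : ℂ) * y0.val.1, y0.val.2.1, y0.val.2.2), hy1mem⟩ with hy1def
  have hsy1 : sMap y1 = pMap (actFirst s x) := by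
    apply Subtype.ext
    rw [pMap_actFirst]
    have h0 : (sMap y0).val = (pMap x).val := congrArg Subtype.val hy0E
    have h01 : ((Real.sqrt (1 - y0.val.2.1 ^ 2) : ℝ) : ℂ) * y0.val.1 = (pMap x).val.1 :=
      congrArg Prod.fst h0
    have h02 : y0.val.2.1 = (pMap x).val.2.1 := congrArg (fun z => z.2.1) h0
    have h03 : Real.sqrt (1 - y0.val.2.1 ^ 2) * y0.val.2.2 = (pMap x).val.2.2 :=
      congrArg (fun z => z.2.2) h0
    show (((Real.sqrt (1 - y1.val.2.1 ^ 2) : ℝ) : ℂ) * y1.val.1, y1.val.2.1,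
        Real.sqrt (1 - y1.val.2.1 ^ 2) * y1.val.2.2) = _
    have hval : y1.val = ((s : ℂ) * y0.val.1, y0.val.2.1, y0.val.2.2) := rfl
    rw [hval]
    refine Prod.ext ?_ (Prod.ext h02 h03)
    show ((Real.sqrt (1 - y0.val.2.1 ^ 2) : ℝ) : ℂ) * ((s : ℂ) * y0.val.1) = _
    rw [← h01]; ring
  have key1 : (homeoQE.trans homeoSE.symm) (Quot.mk orbitRelS4 (actFirst s x)) = y1 := by
    show homeoSE.symm (homeoQE (Quot.mk orbitRelS4 (actFirst s x))) = y1
    rw [homeoQE_apply]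
    show homeoSE.symm (pMap (actFirst s x)) = y1
    rw [← hsy1]
    exact homeoSE.symm_apply_apply y1
  have key0 : (homeoQE.trans homeoSE.symm) (Quot.mk orbitRelS4 x) = y0 := by
    show homeoSE.symm (homeoQE (Quot.mk orbitRelS4 x)) = y0
    rw [homeoQE_apply]
    rfl
  rw [key1, key0]
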